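/- Let g : ℝ → (0,∞) be integrable, decreasing on (0,∞), and even, and let Fg denote its Fourier transform. Then for all x₁, x₂ ∈ ℝ, |Fg(x₁) - Fg(x₂)| ≤ ∫₀^∞ min(ξ|x₁ - x₂|, 2)·min(ξ|x₁ + x₂|, 2)·g(ξ) dξ. -/

import Mathlib

open MeasureTheory Set

theorem fourier_modulus (g : ℝ → ℝ)
    (hpos : ∀ ξ : ℝ, 0 < g ξ)
    (hint : Integrable g)
    (hmono : AntitoneOn g (Set.Ioi 0))
    (heven : ∀ ξ : ℝ, g (-ξ) = g ξ) :
    ∀ x₁ x₂ : ℝ,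
      |(∫ ξ : ℝ, g ξ * Real.cos (x₁ * ξ)) - ∫ ξ : ℝ, g ξ * Real.cos (x₂ * ξ)| ≤
        ∫ ξ in Set.Ioi (0:ℝ),
          min (ξ * |x₁ - x₂|) 2 * min (ξ * |x₁ + x₂|) 2 * g ξ := by
  intro x₁ x₂
  set f : ℝ → ℝ := fun t => 1/2 * min (t * |x₁ - x₂|) 2 * min (t * |x₁ + x₂|) 2 * g t with hf
  have hgabs : ∀ ξ : ℝ, g |ξ| = g ξ := by
    intro ξ
    rcases abs_choice ξ with h | h
    · rw [h]
    · rw [h, heven]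
  -- integrability of the integrands
  have hix : ∀ x : ℝ, Integrable (fun ξ => g ξ * Real.cos (x * ξ)) := by
    intro x
    have : Integrable (fun ξ => Real.cos (x * ξ) * g ξ) :=
      hint.bdd_mul (c := 1) ((Real.continuous_cos.comp (continuous_const.mul continuous_id)).aestronglyMeasurable)
        (Filter.Eventually.of_forall fun ξ => by simpa using Real.abs_cos_le_one (x * ξ))
    simpa [mul_comm] using this
  -- integrability of the dominating function fun ξ => f |ξ|
  have hFint : Integrable (fun ξ => f |ξ|) := by
    have : Integrable (fun ξ =>
        (1/2 * min (|ξ| * |x₁ - x₂|) 2 * min (|ξ| * |x₁ + x₂|) 2) * g ξ) := by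
      apply hint.bdd_mul (c := 2)
      · apply Continuous.aestronglyMeasurable
        continuity
      · refine Filter.Eventually.of_forall fun ξ => ?_
        have h1 : 0 ≤ min (|ξ| * |x₁ - x₂|) 2 := le_min (by positivity) (by norm_num)
        have h2 : 0 ≤ min (|ξ| * |x₁ + x₂|) 2 := le_min (by positivity) (by norm_num)
        have h3 : min (|ξ| * |x₁ - x₂|) 2 ≤ 2 := min_le_right _ _
        have h4 : min (|ξ| * |x₁ + x₂|) 2 ≤ 2 := min_le_right _ _
        rw [Real.norm_eq_abs, abs_of_nonneg (by positivity)]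
        nlinarith
    refine this.congr (Filter.Eventually.of_forall fun ξ => ?_)
    simp only [hf, hgabs ξ]
  -- pointwise bound
  have hbound : ∀ ξ : ℝ,
      ‖g ξ * Real.cos (x₁ * ξ) - g ξ * Real.cos (x₂ * ξ)‖ ≤ f |ξ| := by
    intro ξ
    set a := |ξ| * |x₁ - x₂| with ha
    set b := |ξ| * |x₁ + x₂| with hb
    have ha0 : 0 ≤ a := by positivity
    have hb0 : 0 ≤ b := by positivity
    have e1 : |(x₁ * ξ + x₂ * ξ) / 2| = b / 2 := by
      rw [abs_div, abs_two, ← add_mul, abs_mul, mul_comm]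
    have e2 : |(x₁ * ξ - x₂ * ξ) / 2| = a / 2 := by
      rw [abs_div, abs_two, ← sub_mul, abs_mul, mul_comm]
    have hs1 : |Real.sin ((x₁ * ξ + x₂ * ξ) / 2)| ≤ min (b / 2) 1 :=
      le_min (e1 ▸ Real.abs_sin_le_abs)
        (abs_le.mpr ⟨Real.neg_one_le_sin _, Real.sin_le_one _⟩)
    have hs2 : |Real.sin ((x₁ * ξ - x₂ * ξ) / 2)| ≤ min (a / 2) 1 :=
      le_min (e2 ▸ Real.abs_sin_le_abs)
        (abs_le.mpr ⟨Real.neg_one_le_sin _, Real.sin_le_one _⟩)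
    have hm1 : min (b / 2) 1 = min b 2 / 2 := by
      rw [show (1:ℝ) = 2/2 by norm_num, min_div_div_right (by norm_num : (0:ℝ) ≤ 2)]
    have hm2 : min (a / 2) 1 = min a 2 / 2 := by
      rw [show (1:ℝ) = 2/2 by norm_num, min_div_div_right (by norm_num : (0:ℝ) ≤ 2)]
    have hgpos := hpos ξ
    have key : |Real.cos (x₁ * ξ) - Real.cos (x₂ * ξ)| ≤ 1/2 * min a 2 * min b 2 := by
      rw [Real.cos_sub_cos]
      have : |(-2) * Real.sin ((x₁ * ξ + x₂ * ξ) / 2) * Real.sin ((x₁ * ξ - x₂ * ξ) / 2)|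
          = 2 * |Real.sin ((x₁ * ξ + x₂ * ξ) / 2)| * |Real.sin ((x₁ * ξ - x₂ * ξ) / 2)| := by
        rw [abs_mul, abs_mul]; norm_num
      rw [this]
      have h1 : 2 * |Real.sin ((x₁ * ξ + x₂ * ξ) / 2)| * |Real.sin ((x₁ * ξ - x₂ * ξ) / 2)|
          ≤ 2 * min (b / 2) 1 * min (a / 2) 1 := by
        apply mul_le_mul _ hs2 (abs_nonneg _)
        · positivity
        · apply mul_le_mul_of_nonneg_left hs1; norm_num
      calc 2 * |Real.sin ((x₁ * ξ + x₂ * ξ) / 2)| * |Real.sin ((x₁ * ξ - x₂ * ξ) / 2)|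
          ≤ 2 * min (b / 2) 1 * min (a / 2) 1 := h1
        _ = 1/2 * min a 2 * min b 2 := by rw [hm1, hm2]; ring
    have : ‖g ξ * Real.cos (x₁ * ξ) - g ξ * Real.cos (x₂ * ξ)‖
        = g ξ * |Real.cos (x₁ * ξ) - Real.cos (x₂ * ξ)| := by
      rw [Real.norm_eq_abs, ← mul_sub, abs_mul, abs_of_pos hgpos]
    rw [this]
    have hff : f |ξ| = 1/2 * min a 2 * min b 2 * g ξ := by
      simp only [hf, hgabs ξ, ha, hb]
    rw [hff]
    calc g ξ * |Real.cos (x₁ * ξ) - Real.cos (x₂ * ξ)|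
        ≤ g ξ * (1/2 * min a 2 * min b 2) := mul_le_mul_of_nonneg_left key hgpos.le
      _ = 1/2 * min a 2 * min b 2 * g ξ := by ring
  -- main estimate
  have step1 : |(∫ ξ : ℝ, g ξ * Real.cos (x₁ * ξ)) - ∫ ξ : ℝ, g ξ * Real.cos (x₂ * ξ)|
      ≤ ∫ ξ : ℝ, f |ξ| := by
    rw [← integral_sub (hix x₁) (hix x₂), ← Real.norm_eq_abs]
    exact norm_integral_le_of_norm_le hFint (Filter.Eventually.of_forall hbound)
  have step2 : (∫ ξ : ℝ, f |ξ|) = 2 * ∫ ξ in Set.Ioi (0:ℝ), f ξ := integral_comp_abs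
  have step3 : (∫ ξ in Set.Ioi (0:ℝ), f ξ)
      = 1/2 * ∫ ξ in Set.Ioi (0:ℝ), min (ξ * |x₁ - x₂|) 2 * min (ξ * |x₁ + x₂|) 2 * g ξ := by
    rw [← integral_const_mul]
    refine setIntegral_congr_fun measurableSet_Ioi fun ξ _ => ?_
    simp only [hf]; ring
  calc |(∫ ξ : ℝ, g ξ * Real.cos (x₁ * ξ)) - ∫ ξ : ℝ, g ξ * Real.cos (x₂ * ξ)|
      ≤ ∫ ξ : ℝ, f |ξ| := step1
    _ = 2 * ∫ ξ in Set.Ioi (0:ℝ), f ξ := step2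
    _ = ∫ ξ in Set.Ioi (0:ℝ), min (ξ * |x₁ - x₂|) 2 * min (ξ * |x₁ + x₂|) 2 * g ξ := by
        rw [step3]; ring
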